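/- Let p be a prime and 𝐤 an algebraically closed field of characteristic p. Then for general (a,b,c,d,e,f) ∈ (𝐤^*)^6 (i.e., for all tuples in some nonempty Zariski open dense subset), the ideal generated by a·x^p + b·y^p + c·z and d·y^p + e·w^p + f·z in the Laurent polynomial ring 𝐤[x^{±1}, y^{±1}, z^{±1}, w^{±1}] is not prime. -/

import Mathlib

open scoped BigOperators

noncomputable section

/-- A property `P` of coefficient tuples holds *generically* on the torus `(𝕜ˣ)^σ`:
it holds on a nonempty Zariski-open (hence dense) subset of the torus. -/
def Generically {𝕜 : Type*} [Field 𝕜] {σ : Type*} [Fintype σ] (P : (σ → 𝕜) → Prop) : Prop :=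
  ∃ q : MvPolynomial σ 𝕜,
    (∃ c : σ → 𝕜, (∀ s, c s ≠ 0) ∧ MvPolynomial.eval c q ≠ 0) ∧
    ∀ c : σ → 𝕜, (∀ s, c s ≠ 0) → MvPolynomial.eval c q ≠ 0 → P c

namespace PthPowerAux

open TrivSqZeroExt

/-- The algebra map from the Laurent polynomial ring in 4 variables determined by
4 units of a commutative algebra. -/
noncomputable def torusHom {𝕜 : Type*} [Field 𝕜] {S : Type*} [CommRing S] [Algebra 𝕜 S]
    (u : Fin 4 → Sˣ) : AddMonoidAlgebra 𝕜 (Fin 4 → ℤ) →ₐ[𝕜] S :=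
  AddMonoidAlgebra.lift 𝕜 S (Fin 4 → ℤ)
    { toFun := fun v => ((u 0 ^ (Multiplicative.toAdd v 0) * u 1 ^ (Multiplicative.toAdd v 1) *
        u 2 ^ (Multiplicative.toAdd v 2) * u 3 ^ (Multiplicative.toAdd v 3) : Sˣ) : S)
      map_one' := by simp
      map_mul' := by
        intro v w
        simp only [toAdd_mul, Pi.add_apply, zpow_add, Units.val_mul]
        ring }

theorem torusHom_single {𝕜 : Type*} [Field 𝕜] {S : Type*} [CommRing S] [Algebra 𝕜 S]
    (u : Fin 4 → Sˣ) (v : Fin 4 → ℤ) (t : 𝕜) :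
    torusHom u (AddMonoidAlgebra.single v t) =
      t • ((u 0 ^ v 0 * u 1 ^ v 1 * u 2 ^ v 2 * u 3 ^ v 3 : Sˣ) : S) := by
  simp [torusHom, AddMonoidAlgebra.lift_single]

variable {𝕜 : Type*} [Field 𝕜]

theorem dn_charP {p : ℕ} [CharP 𝕜 p] : CharP (DualNumber 𝕜) p :=
  charP_of_injective_ringHom (R := 𝕜) (f := inlHom 𝕜 𝕜) inl_injective p

theorem dn_inr_pow {p : ℕ} (hp2 : 2 ≤ p) (m : 𝕜) : (inr m : DualNumber 𝕜) ^ p = 0 := by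
  obtain ⟨k, rfl⟩ := Nat.exists_eq_add_of_le hp2
  rw [pow_add, pow_two, inr_mul_inr, zero_mul]

theorem dn_pow_key {p : ℕ} (hp : p.Prime) [CharP 𝕜 p] (a m : 𝕜) :
    (inl a + inr m : DualNumber 𝕜) ^ p = inl (a ^ p) := by
  haveI : Fact p.Prime := ⟨hp⟩
  haveI := dn_charP (𝕜 := 𝕜) (p := p)
  rw [add_pow_char, dn_inr_pow hp.two_le, add_zero, inl_pow]

theorem dn_smul_inl (t s : 𝕜) : t • (inl s : DualNumber 𝕜) = inl (t * s) := by
  ext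
  · simp [fst_smul]
  · simp [snd_smul]

theorem dn_smul_add_inr (t s m : 𝕜) :
    t • (inl s + inr m : DualNumber 𝕜) = inl (t * s) + inr (t * m) := by
  ext
  · simp [fst_smul]
  · simp [snd_smul]

theorem dn_inr_ne_zero (m : 𝕜) (hm : m ≠ 0) : (inr m : DualNumber 𝕜) ≠ 0 := by
  intro h
  exact hm (by simpa using congr_arg snd h)

/-- The Frobenius identity `h^p = f·g₁ - c·g₂` in the Laurent polynomial ring. -/
theorem key_identity {p : ℕ} (hp : p.Prime) [CharP 𝕜 p] (c : Fin 6 → 𝕜)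
    (α β γ : 𝕜) (hA : α ^ p = c 5 * c 0) (hB : β ^ p = c 5 * c 1 - c 2 * c 3)
    (hG : γ ^ p = -(c 2 * c 4)) :
    (AddMonoidAlgebra.single (R := 𝕜) ![(1:ℤ),0,0,0] α + AddMonoidAlgebra.single ![0,1,0,0] β +
      AddMonoidAlgebra.single ![0,0,0,1] γ) ^ p =
    AddMonoidAlgebra.single (0 : Fin 4 → ℤ) (c 5) *
      (AddMonoidAlgebra.single ![(p : ℤ), 0, 0, 0] (c 0) +
        AddMonoidAlgebra.single ![0, (p : ℤ), 0, 0] (c 1) +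
        AddMonoidAlgebra.single ![0, 0, 1, 0] (c 2)) -
    AddMonoidAlgebra.single (0 : Fin 4 → ℤ) (c 2) *
      (AddMonoidAlgebra.single ![0, (p : ℤ), 0, 0] (c 3) +
        AddMonoidAlgebra.single ![0, 0, 0, (p : ℤ)] (c 4) +
        AddMonoidAlgebra.single ![0, 0, 1, 0] (c 5)) := by
  haveI : Fact p.Prime := ⟨hp⟩
  haveI : CharP (AddMonoidAlgebra 𝕜 (Fin 4 → ℤ)) p := by
    refine charP_of_injective_ringHom (R := 𝕜)
      (f := AddMonoidAlgebra.singleZeroRingHom) ?_ p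
    exact fun a b hab => by simpa using (AddMonoidAlgebra.single_right_injective (m := (0 : Fin 4 → ℤ))) hab
  rw [add_pow_char, add_pow_char, AddMonoidAlgebra.single_pow, AddMonoidAlgebra.single_pow,
    AddMonoidAlgebra.single_pow, hA, hB, hG]
  have h0 : p • (![(1:ℤ),0,0,0]) = ![(p:ℤ),0,0,0] := by
    funext i; fin_cases i <;> simp
  have h1 : p • (![(0:ℤ),1,0,0]) = ![0,(p:ℤ),0,0] := by
    funext i; fin_cases i <;> simp
  have h3 : p • (![(0:ℤ),0,0,1]) = ![0,0,0,(p:ℤ)] := by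
    funext i; fin_cases i <;> simp
  rw [h0, h1, h3]
  simp only [AddMonoidAlgebra.single_mul_single, zero_add, mul_add]
  ext k
  classical
  simp only [AddMonoidAlgebra.coeff_sub, AddMonoidAlgebra.coeff_add, AddMonoidAlgebra.coeff_single]
  repeat rw [Finsupp.sub_apply]
  repeat rw [Finsupp.add_apply]
  repeat rw [Finsupp.single_apply]
  split_ifs <;> ring

end PthPowerAux

open PthPowerAux TrivSqZeroExt in
/-- Example (5') of the Introduction: over an algebraically closed field `𝕜` of
characteristic `p > 0`, for general `(a,b,c,d,e,f) ∈ (𝕜*)⁶` the ideal generated by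
`a·x^p + b·y^p + c·z` and `d·y^p + e·w^p + f·z` in the Laurent polynomial ring
`𝕜[x^{±1}, y^{±1}, z^{±1}, w^{±1}]` is not prime. -/
theorem pth_power_after_cancellation_not_prime {p : ℕ} (hp : p.Prime)
    {𝕜 : Type*} [Field 𝕜] [IsAlgClosed 𝕜] [CharP 𝕜 p] :
    Generically (fun c : Fin 6 → 𝕜 =>
      ¬ (Ideal.span ({AddMonoidAlgebra.single ![(p : ℤ), 0, 0, 0] (c 0) +
            AddMonoidAlgebra.single ![0, (p : ℤ), 0, 0] (c 1) +
            AddMonoidAlgebra.single ![0, 0, 1, 0] (c 2),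
          AddMonoidAlgebra.single ![0, (p : ℤ), 0, 0] (c 3) +
            AddMonoidAlgebra.single ![0, 0, 0, (p : ℤ)] (c 4) +
            AddMonoidAlgebra.single ![0, 0, 1, 0] (c 5)} :
        Set (AddMonoidAlgebra 𝕜 (Fin 4 → ℤ)))).IsPrime) := by
  classical
  haveI : Fact p.Prime := ⟨hp⟩
  refine ⟨1, ⟨fun _ => 1, fun _ => one_ne_zero, by simp⟩, ?_⟩
  intro c hc _ hPrime
  -- p-th roots of the relevant coefficients
  obtain ⟨α, hA⟩ := IsAlgClosed.exists_pow_nat_eq (c 5 * c 0) hp.pos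
  obtain ⟨β, hB⟩ := IsAlgClosed.exists_pow_nat_eq (c 5 * c 1 - c 2 * c 3) hp.pos
  obtain ⟨γ, hG⟩ := IsAlgClosed.exists_pow_nat_eq (-(c 2 * c 4)) hp.pos
  have hα : α ≠ 0 := by
    intro h
    rw [h, zero_pow hp.ne_zero] at hA
    exact (mul_ne_zero (hc 5) (hc 0)) hA.symm
  have hγ : γ ≠ 0 := by
    intro h
    rw [h, zero_pow hp.ne_zero] at hG
    exact (mul_ne_zero (hc 2) (hc 4)) (neg_eq_zero.mp hG.symm)
  -- a good point on the torus
  obtain ⟨r, hr⟩ := IsAlgClosed.exists_pow_nat_eq (-(c 1) / c 0) hp.pos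
  obtain ⟨x0, hx0mem⟩ := Infinite.exists_notMem_finset ({0, -(β/α), r} : Finset 𝕜)
  simp only [Finset.mem_insert, Finset.mem_singleton, not_or] at hx0mem
  obtain ⟨hx0, hx0b, hx0r⟩ := hx0mem
  have hax : α * x0 + β ≠ 0 := by
    intro h
    apply hx0b
    rw [← neg_div, eq_div_iff hα]
    linear_combination h
  have hz0num : c 0 * x0 ^ p + c 1 ≠ 0 := by
    intro h
    apply hx0r
    have hxp : x0 ^ p = r ^ p := by
      rw [hr, eq_div_iff (hc 0)]
      linear_combination h
    have := frobenius_inj 𝕜 p (a₁ := x0) (a₂ := r)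
    simp only [frobenius_def] at this
    exact this hxp
  set w0 : 𝕜 := -((α * x0 + β) / γ) with hw0def
  set z0 : 𝕜 := -((c 0 * x0 ^ p + c 1) / c 2) with hz0def
  have hw0 : w0 ≠ 0 := neg_ne_zero.mpr (div_ne_zero hax hγ)
  have hz0 : z0 ≠ 0 := neg_ne_zero.mpr (div_ne_zero hz0num (hc 2))
  have hγw : γ * w0 = -(α * x0 + β) := by
    rw [hw0def, mul_neg, mul_div_cancel₀ _ hγ]
  have hcz : c 2 * z0 = -(c 0 * x0 ^ p + c 1) := by
    rw [hz0def, mul_neg, mul_div_cancel₀ _ (hc 2)]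
  have hlin : α * x0 + β + γ * w0 = 0 := by linear_combination hγw
  have hg1pt : c 0 * x0 ^ p + c 1 + c 2 * z0 = 0 := by linear_combination hcz
  have hg2pt : c 3 + c 4 * w0 ^ p + c 5 * z0 = 0 := by
    have hE1 : γ ^ p * w0 ^ p + α ^ p * x0 ^ p + β ^ p = 0 := by
      have h2 : (γ * w0) ^ p = -((α * x0 + β) ^ p) := by
        rw [hγw, neg_pow, neg_one_pow_char, neg_one_mul]
      have h3 : (α * x0 + β) ^ p = α ^ p * x0 ^ p + β ^ p := by
        rw [add_pow_char, mul_pow]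
      rw [← mul_pow, h2, h3]; ring
    apply mul_left_cancel₀ (hc 2)
    rw [mul_zero]
    linear_combination (-1 : 𝕜) * hE1 + c 5 * hg1pt + x0 ^ p * hA + hB + w0 ^ p * hG
  -- the dual-numbers evaluation
  haveI : CharP (DualNumber 𝕜) p := dn_charP
  have hXu : IsUnit (inl x0 + inr α⁻¹ : DualNumber 𝕜) := by
    rw [isUnit_iff_isUnit_fst]
    simpa using isUnit_iff_ne_zero.mpr hx0
  have hZu : IsUnit (inl z0 : DualNumber 𝕜) := isUnit_inl_iff.mpr (isUnit_iff_ne_zero.mpr hz0)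
  have hWu : IsUnit (inl w0 : DualNumber 𝕜) := isUnit_inl_iff.mpr (isUnit_iff_ne_zero.mpr hw0)
  set u : Fin 4 → (DualNumber 𝕜)ˣ := ![hXu.unit, 1, hZu.unit, hWu.unit] with hu
  set φ : AddMonoidAlgebra 𝕜 (Fin 4 → ℤ) →ₐ[𝕜] DualNumber 𝕜 := torusHom u with hφ
  have hu0 : ((u 0 : (DualNumber 𝕜)ˣ) : DualNumber 𝕜) = inl x0 + inr α⁻¹ := by
    rw [hu]; simp
  have hu1 : ((u 1 : (DualNumber 𝕜)ˣ) : DualNumber 𝕜) = 1 := by rw [hu]; simp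
  have hu2 : ((u 2 : (DualNumber 𝕜)ˣ) : DualNumber 𝕜) = inl z0 := by
    rw [hu]; simp
  have hu3 : ((u 3 : (DualNumber 𝕜)ˣ) : DualNumber 𝕜) = inl w0 := by
    rw [hu]; simp
  -- values of φ on the relevant monomials
  have val0 : φ (AddMonoidAlgebra.single ![(p : ℤ), 0, 0, 0] (c 0)) = inl (c 0 * x0 ^ p) := by
    rw [hφ, torusHom_single]
    simp only [Matrix.cons_val_zero, Matrix.cons_val_one, Matrix.head_cons, zpow_zero, mul_one,
      Matrix.cons_val_two, Matrix.cons_val_three, Matrix.tail_cons, zpow_natCast]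
    rw [Units.val_pow_eq_pow_val, hu0, dn_pow_key hp, dn_smul_inl]
  have valE1 : ∀ t : 𝕜, φ (AddMonoidAlgebra.single ![0, (p : ℤ), 0, 0] t) = inl t := by
    intro t
    rw [hφ, torusHom_single]
    simp only [Matrix.cons_val_zero, Matrix.cons_val_one, Matrix.head_cons, zpow_zero, one_mul,
      mul_one, Matrix.cons_val_two, Matrix.cons_val_three, Matrix.tail_cons, zpow_natCast]
    rw [Units.val_pow_eq_pow_val, hu1, one_pow, ← inl_one, dn_smul_inl, mul_one]
  have valEz : ∀ t : 𝕜, φ (AddMonoidAlgebra.single ![0, 0, 1, 0] t) = inl (t * z0) := by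
    intro t
    rw [hφ, torusHom_single]
    simp only [Matrix.cons_val_zero, Matrix.cons_val_one, Matrix.head_cons, zpow_zero, one_mul,
      mul_one, Matrix.cons_val_two, Matrix.cons_val_three, Matrix.tail_cons, zpow_one]
    rw [hu2, dn_smul_inl]
  have valE3 : ∀ t : 𝕜, φ (AddMonoidAlgebra.single ![0, 0, 0, (p : ℤ)] t) = inl (t * w0 ^ p) := by
    intro t
    rw [hφ, torusHom_single]
    simp only [Matrix.cons_val_zero, Matrix.cons_val_one, Matrix.head_cons, zpow_zero, one_mul,
      mul_one, Matrix.cons_val_two, Matrix.cons_val_three, Matrix.tail_cons, zpow_natCast]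
    rw [Units.val_pow_eq_pow_val, hu3, inl_pow, dn_smul_inl]
  have vale0 : φ (AddMonoidAlgebra.single ![(1:ℤ), 0, 0, 0] α) = inl (α * x0) + inr 1 := by
    rw [hφ, torusHom_single]
    simp only [Matrix.cons_val_zero, Matrix.cons_val_one, Matrix.head_cons, zpow_zero, one_mul,
      mul_one, Matrix.cons_val_two, Matrix.cons_val_three, Matrix.tail_cons, zpow_one]
    rw [hu0, dn_smul_add_inr, mul_inv_cancel₀ hα]
  have vale1 : φ (AddMonoidAlgebra.single ![0, (1:ℤ), 0, 0] β) = inl β := by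
    rw [hφ, torusHom_single]
    simp only [Matrix.cons_val_zero, Matrix.cons_val_one, Matrix.head_cons, zpow_zero, one_mul,
      mul_one, Matrix.cons_val_two, Matrix.cons_val_three, Matrix.tail_cons, zpow_one]
    rw [hu1, ← inl_one, dn_smul_inl, mul_one]
  have vale3 : φ (AddMonoidAlgebra.single ![0, 0, 0, (1:ℤ)] γ) = inl (γ * w0) := by
    rw [hφ, torusHom_single]
    simp only [Matrix.cons_val_zero, Matrix.cons_val_one, Matrix.head_cons, zpow_zero, one_mul,
      mul_one, Matrix.cons_val_two, Matrix.cons_val_three, Matrix.tail_cons, zpow_one]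
    rw [hu3, dn_smul_inl]
  -- φ kills both generators
  have hφg1 : φ (AddMonoidAlgebra.single ![(p : ℤ), 0, 0, 0] (c 0) +
      AddMonoidAlgebra.single ![0, (p : ℤ), 0, 0] (c 1) +
      AddMonoidAlgebra.single ![0, 0, 1, 0] (c 2)) = 0 := by
    rw [map_add, map_add, val0, valE1, valEz, ← inl_add, ← inl_add]
    rw [show c 0 * x0 ^ p + c 1 + c 2 * z0 = 0 from hg1pt, inl_zero]
  have hφg2 : φ (AddMonoidAlgebra.single ![0, (p : ℤ), 0, 0] (c 3) +
      AddMonoidAlgebra.single ![0, 0, 0, (p : ℤ)] (c 4) +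
      AddMonoidAlgebra.single ![0, 0, 1, 0] (c 5)) = 0 := by
    rw [map_add, map_add, valE1, valE3, valEz, ← inl_add, ← inl_add]
    rw [show c 3 + c 4 * w0 ^ p + c 5 * z0 = 0 from hg2pt, inl_zero]
  -- φ of the putative p-th root is ε ≠ 0
  have hφh : φ (AddMonoidAlgebra.single ![(1:ℤ), 0, 0, 0] α +
      AddMonoidAlgebra.single ![0, (1:ℤ), 0, 0] β +
      AddMonoidAlgebra.single ![0, 0, 0, (1:ℤ)] γ) = inr 1 := by
    rw [map_add, map_add, vale0, vale1, vale3]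
    ext
    · show α * x0 + 0 + β + γ * w0 = 0
      linear_combination hlin
    · show (0 : 𝕜) + 1 + 0 + 0 = 1
      ring
  -- membership of the p-th power, hence of the root by primality
  have hmem := hPrime.mem_of_pow_mem p (r := AddMonoidAlgebra.single ![(1:ℤ), 0, 0, 0] α +
      AddMonoidAlgebra.single ![0, (1:ℤ), 0, 0] β +
      AddMonoidAlgebra.single ![0, 0, 0, (1:ℤ)] γ) (by
    rw [key_identity hp c α β γ hA hB hG]
    exact Ideal.sub_mem _
      (Ideal.mul_mem_left _ _ (Ideal.subset_span (Set.mem_insert _ _)))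
      (Ideal.mul_mem_left _ _ (Ideal.subset_span (Set.mem_insert_of_mem _ rfl))))
  obtain ⟨u', v', huv⟩ := Ideal.mem_span_pair.mp hmem
  have hzero : φ (AddMonoidAlgebra.single ![(1:ℤ), 0, 0, 0] α +
      AddMonoidAlgebra.single ![0, (1:ℤ), 0, 0] β +
      AddMonoidAlgebra.single ![0, 0, 0, (1:ℤ)] γ) = 0 := by
    rw [← huv, map_add, map_mul, map_mul, hφg1, hφg2, mul_zero, mul_zero, add_zero]
  rw [hφh] at hzero
  exact dn_inr_ne_zero 1 one_ne_zero hzero
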